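/- Let N = 2, α ∈ C^2, b ∈ C. The submodule A''_{1,α,b} = span{v_k : k ∈ 2Z^2} of A_{1,α,b}, regarded as a module over the rank-2 Witt algebra W, is irreducible if and only if α ∉ 2Z^2 or b ∉ {0,1}. -/
import Mathlib

open Submodule

/-- Pick `t ∈ ℤ` avoiding two affine conditions with nonzero slopes. -/
private lemma pick3 (A B C D : ℂ) (hC : C ≠ 0) (hD : D ≠ 0) :
    ∃ t : ℤ, A + C * (t : ℂ) ≠ 0 ∧ B + D * (t : ℂ) ≠ 0 := by
  by_cases hA0 : A + C * 0 = 0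
  · have h1 : A + C * 1 ≠ 0 := fun h => hC (by linear_combination h - hA0)
    have h2 : A + C * 2 ≠ 0 := fun h => hC (by linear_combination (h - hA0) / 2)
    by_cases hB1 : B + D * 1 = 0
    · exact ⟨2, by push_cast; exact h2,
        fun h => hD (by push_cast at h; linear_combination h - hB1)⟩
    · exact ⟨1, by push_cast; exact h1, by push_cast; exact hB1⟩
  · by_cases hB0 : B + D * 0 = 0
    · have hB1 : B + D * 1 ≠ 0 := fun h => hD (by linear_combination h - hB0)
      by_cases hA1 : A + C * 1 = 0
      · have hA2 : A + C * 2 ≠ 0 := fun h => hC (by linear_combination h - hA1)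
        have hB2 : B + D * 2 ≠ 0 := fun h => hD (by linear_combination (h - hB0) / 2)
        exact ⟨2, by push_cast; exact hA2, by push_cast; exact hB2⟩
      · exact ⟨1, by push_cast; exact hA1, by push_cast; exact hB1⟩
    · exact ⟨0, by push_cast; exact hA0, by push_cast; exact hB0⟩

/-- The combinatorial path lemma: under the hypothesis, from any `k` one can reach
any `m` in two steps with nonzero coefficients. -/
private lemma key_path (α : ℂ × ℂ) (b : ℂ)
    (H : (¬∃ p : ℤ × ℤ, α = (((2 * p.1 : ℤ) : ℂ), ((2 * p.2 : ℤ) : ℂ))) ∨ (b ≠ 0 ∧ b ≠ 1))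
    (k m : ℤ × ℤ) :
    ∃ k' : ℤ × ℤ,
      ¬(α.1 + 2 * (k.1 : ℂ) + 2 * b * ((k'.1 : ℂ) - k.1) = 0 ∧
        α.2 + 2 * (k.2 : ℂ) + 2 * b * ((k'.2 : ℂ) - k.2) = 0) ∧
      ¬(α.1 + 2 * (k'.1 : ℂ) + 2 * b * ((m.1 : ℂ) - k'.1) = 0 ∧
        α.2 + 2 * (k'.2 : ℂ) + 2 * b * ((m.2 : ℂ) - k'.2) = 0) := by
  have hnot : (¬∃ p : ℤ × ℤ, α = (((2 * p.1 : ℤ) : ℂ), ((2 * p.2 : ℤ) : ℂ))) →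
      ∀ q : ℤ × ℤ, ¬(α.1 + 2 * (q.1 : ℂ) = 0 ∧ α.2 + 2 * (q.2 : ℂ) = 0) := by
    rintro hne q ⟨h1, h2⟩
    exact hne ⟨⟨-q.1, -q.2⟩, Prod.ext (by push_cast; linear_combination h1)
      (by push_cast; linear_combination h2)⟩
  by_cases hb0 : b = 0
  · subst hb0
    have hα := hnot (H.resolve_right (fun h => h.1 rfl))
    refine ⟨k, ?_, ?_⟩
    · rintro ⟨h1, h2⟩
      exact hα k ⟨by linear_combination h1, by linear_combination h2⟩
    · rintro ⟨h1, h2⟩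
      exact hα k ⟨by linear_combination h1, by linear_combination h2⟩
  · by_cases hb1 : b = 1
    · subst hb1
      have hα := hnot (H.resolve_right (fun h => h.2 rfl))
      refine ⟨k, ?_, ?_⟩
      · rintro ⟨h1, h2⟩
        exact hα k ⟨by linear_combination h1, by linear_combination h2⟩
      · rintro ⟨h1, h2⟩
        exact hα m ⟨by linear_combination h1, by linear_combination h2⟩
    · obtain ⟨t, h1, h2⟩ := pick3 (α.1 + 2 * (k.1 : ℂ) - 2 * b * (k.1 : ℂ))
        (α.1 + 2 * b * (m.1 : ℂ)) (2 * b) (2 - 2 * b)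
        (by simpa using hb0)
        (fun h => hb1 (by linear_combination -h / 2))
      refine ⟨(t, 0), ?_, ?_⟩
      · rintro ⟨hc, -⟩
        exact h1 (by linear_combination hc)
      · rintro ⟨hc, -⟩
        exact h2 (by linear_combination hc)

/-- Extraction: an invariant submodule containing a nonzero finite combination of
basis vectors contains some basis vector. -/
private lemma extract {V : Type*} [AddCommGroup V] [Module ℂ V]
    (w : ℤ × ℤ → V) (α : ℂ × ℂ) (U : Submodule ℂ V)
    (D : (ℂ × ℂ) → Module.End ℂ V)
    (hD : ∀ (d : ℂ × ℂ) (k : ℤ × ℤ),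
      D d (w k) = (d.1 * (α.1 + 2 * (k.1 : ℂ)) + d.2 * (α.2 + 2 * (k.2 : ℂ))) • w k)
    (hU : ∀ d : ℂ × ℂ, ∀ u ∈ U, D d u ∈ U) :
    ∀ (N : ℕ) (s : Finset (ℤ × ℤ)) (c : (ℤ × ℤ) → ℂ), s.card ≤ N → s.Nonempty →
      (∀ k ∈ s, c k ≠ 0) → (∑ k ∈ s, c k • w k) ∈ U → ∃ k, w k ∈ U := by
  intro N
  induction N with
  | zero => intro s c hcard hne; exact absurd (Finset.card_pos.mpr hne) (by omega)
  | succ N ih =>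
    intro s c hcard hne hc hmem
    rcases eq_or_lt_of_le (Finset.one_le_card.mpr hne) with h1 | h1
    · obtain ⟨k, rfl⟩ := Finset.card_eq_one.mp h1.symm
      rw [Finset.sum_singleton] at hmem
      refine ⟨k, ?_⟩
      have := U.smul_mem (c k)⁻¹ hmem
      rwa [smul_smul, inv_mul_cancel₀ (hc k (Finset.mem_singleton_self k)), one_smul] at this
    · obtain ⟨k₀, hk₀, k₁, hk₁, hne01⟩ := Finset.one_lt_card.mp h1
      set a : ℤ := k₀.1 - k₁.1 with ha
      set a' : ℤ := k₀.2 - k₁.2 with ha'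
      set d : ℂ × ℂ := ((a : ℂ), (a' : ℂ)) with hd
      set lam : (ℤ × ℤ) → ℂ :=
        fun k => d.1 * (α.1 + 2 * (k.1 : ℂ)) + d.2 * (α.2 + 2 * (k.2 : ℂ)) with hlam
      have hlamne : lam k₀ - lam k₁ ≠ 0 := by
        have hint : (a ^ 2 + a' ^ 2 : ℤ) ≠ 0 := by
          have : a ≠ 0 ∨ a' ≠ 0 := by
            by_contra hcon
            push_neg at hcon
            exact hne01 (Prod.ext (by omega) (by omega))
          rcases this with h | h
          · have h2 : 0 < a ^ 2 := by positivity
            nlinarith [sq_nonneg a']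
          · have h2 : 0 < a' ^ 2 := by positivity
            nlinarith [sq_nonneg a]
        have : lam k₀ - lam k₁ = 2 * ((a ^ 2 + a' ^ 2 : ℤ) : ℂ) := by
          simp only [hlam, hd, ha, ha']
          push_cast
          ring
        rw [this]
        simp only [ne_eq, mul_eq_zero, OfNat.ofNat_ne_zero, false_or]
        exact_mod_cast hint
      set c' : (ℤ × ℤ) → ℂ := fun k => c k * (lam k - lam k₀) with hc'
      classical
      set s' : Finset (ℤ × ℤ) := (s.erase k₀).filter (fun k => c' k ≠ 0) with hs'
      have hmem' : (∑ k ∈ s', c' k • w k) ∈ U := by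
        have e1 : ∑ k ∈ s', c' k • w k = ∑ k ∈ s.erase k₀, c' k • w k :=
          Finset.sum_filter_of_ne (fun x _ hx => fun hzero => hx (by rw [hzero, zero_smul]))
        have e2 : ∑ k ∈ s.erase k₀, c' k • w k = ∑ k ∈ s, c' k • w k :=
          Finset.sum_erase _ (by simp [hc'])
        have e3 : ∑ k ∈ s, c' k • w k =
            D d (∑ k ∈ s, c k • w k) - lam k₀ • (∑ k ∈ s, c k • w k) := by
          rw [map_sum, Finset.smul_sum, ← Finset.sum_sub_distrib]
          refine Finset.sum_congr rfl fun k hk => ?_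
          rw [map_smul, hD d k, smul_smul, smul_smul, ← sub_smul]
          congr 1
          simp only [hc', hlam]
          ring
        rw [e1, e2, e3]
        exact U.sub_mem (hU d _ hmem) (U.smul_mem _ hmem)
      refine ih s' c' ?_ ⟨k₁, ?_⟩ (fun k hk => (Finset.mem_filter.mp hk).2) hmem'
      · have hle1 : s'.card ≤ (s.erase k₀).card := by
          rw [hs']; exact Finset.card_filter_le _ _
        have hle2 : (s.erase k₀).card = s.card - 1 := Finset.card_erase_of_mem hk₀
        omega
      · refine Finset.mem_filter.mpr ⟨Finset.mem_erase.mpr ⟨fun h => hne01 h.symm, hk₁⟩, ?_⟩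
        simp only [hc', ne_eq, mul_eq_zero, not_or]
        exact ⟨hc k₁ hk₁, fun h => hlamne (by linear_combination -h)⟩

theorem stmt_9 (α : ℂ × ℂ) (b : ℂ)
    (V : Type*) [AddCommGroup V] [Module ℂ V] (w : ℤ × ℤ → V)
    (hli : LinearIndependent ℂ w)
    (hspan : Submodule.span ℂ (Set.range w) = ⊤)
    (T : ℤ × ℤ → ℂ × ℂ → Module.End ℂ V)
    (hT : ∀ n k : ℤ × ℤ, ∀ d : ℂ × ℂ,
      T n d (w k) =
        (d.1 * (α.1 + 2 * (k.1 : ℂ) + 2 * b * (n.1 : ℂ)) +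
          d.2 * (α.2 + 2 * (k.2 : ℂ) + 2 * b * (n.2 : ℂ))) • w (n + k)) :
    (∀ U : Submodule ℂ V,
        (∀ n : ℤ × ℤ, ∀ d : ℂ × ℂ, ∀ u ∈ U, T n d u ∈ U) → U = ⊥ ∨ U = ⊤) ↔
      ((¬∃ p : ℤ × ℤ, α = (((2 * p.1 : ℤ) : ℂ), ((2 * p.2 : ℤ) : ℂ))) ∨ (b ≠ 0 ∧ b ≠ 1)) := by
  constructor
  · -- irreducible → condition; contrapositive
    intro hirr
    by_contra hcon
    push_neg at hcon
    obtain ⟨⟨p, hp⟩, hb⟩ := hcon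
    have hα1 : α.1 = ((2 * p.1 : ℤ) : ℂ) := by rw [hp]
    have hα2 : α.2 = ((2 * p.2 : ℤ) : ℂ) := by rw [hp]
    have hb01 : b = 0 ∨ b = 1 := by
      by_cases h0 : b = 0
      · exact Or.inl h0
      · exact Or.inr (hb h0)
    rcases hb01 with hb0 | hb1
    · -- b = 0 : span of w(-p) is invariant, nonzero, proper
      subst hb0
      set U : Submodule ℂ V := Submodule.span ℂ {w (-p)} with hUdef
      have hinv : ∀ n : ℤ × ℤ, ∀ d : ℂ × ℂ, ∀ u ∈ U, T n d u ∈ U := by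
        intro n d u hu
        rw [hUdef, mem_span_singleton] at hu
        obtain ⟨aa, rfl⟩ := hu
        rw [map_smul, hT]
        have hcoef : (d.1 * (α.1 + 2 * (((-p : ℤ × ℤ).1 : ℤ) : ℂ) + 2 * 0 * (n.1 : ℂ)) +
            d.2 * (α.2 + 2 * (((-p : ℤ × ℤ).2 : ℤ) : ℂ) + 2 * 0 * (n.2 : ℂ))) = 0 := by
          simp only [Prod.fst_neg, Prod.snd_neg, hα1, hα2]
          push_cast
          ring
        rw [hcoef, zero_smul, smul_zero]
        exact U.zero_mem
      rcases hirr U hinv with hbot | htop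
      · have : w (-p) ∈ U := subset_span rfl
        rw [hbot, mem_bot] at this
        exact hli.ne_zero (-p) this
      · have hmem : w (-p + (1, 0)) ∈ U := htop ▸ mem_top
        have hni : (-p + ((1 : ℤ), (0 : ℤ))) ∉ ({-p} : Set (ℤ × ℤ)) := by
          simp [Prod.ext_iff]
        have := hli.notMem_span_image (s := {-p}) hni
        rw [Set.image_singleton] at this
        exact this hmem
    · -- b = 1 : span of {w k : k ≠ -p} is invariant, nonzero, proper
      subst hb1
      set U : Submodule ℂ V := Submodule.span ℂ (w '' {k | k ≠ -p}) with hUdef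
      have hinv : ∀ n : ℤ × ℤ, ∀ d : ℂ × ℂ, ∀ u ∈ U, T n d u ∈ U := by
        intro n d u hu
        have hle : Submodule.span ℂ (w '' {k | k ≠ -p}) ≤ Submodule.comap (T n d) U := by
          rw [span_le]
          rintro _ ⟨k, hk, rfl⟩
          simp only [SetLike.mem_coe, mem_comap]
          rw [hT]
          by_cases hnk : n + k = -p
          · have hcoef : (d.1 * (α.1 + 2 * (k.1 : ℂ) + 2 * 1 * (n.1 : ℂ)) +
                d.2 * (α.2 + 2 * (k.2 : ℂ) + 2 * 1 * (n.2 : ℂ))) = 0 := by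
              have h1 : n.1 + k.1 = -p.1 := congrArg Prod.fst hnk
              have h2 : n.2 + k.2 = -p.2 := congrArg Prod.snd hnk
              have h1' : (n.1 : ℂ) + (k.1 : ℂ) = -(p.1 : ℂ) := by exact_mod_cast h1
              have h2' : (n.2 : ℂ) + (k.2 : ℂ) = -(p.2 : ℂ) := by exact_mod_cast h2
              rw [hα1, hα2]
              push_cast
              linear_combination (2 * d.1) * h1' + (2 * d.2) * h2'
            rw [hcoef, zero_smul]
            exact U.zero_mem
          · exact U.smul_mem _ (subset_span ⟨n + k, hnk, rfl⟩)
        exact hle hu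
      rcases hirr U hinv with hbot | htop
      · have hne : (-p + ((1 : ℤ), (0 : ℤ))) ≠ -p := by simp [Prod.ext_iff]
        have : w (-p + ((1 : ℤ), (0 : ℤ))) ∈ U := subset_span ⟨_, hne, rfl⟩
        rw [hbot, mem_bot] at this
        exact hli.ne_zero _ this
      · have hmem : w (-p) ∈ U := htop ▸ mem_top
        have hni : (-p : ℤ × ℤ) ∉ {k : ℤ × ℤ | k ≠ -p} := by simp
        exact hli.notMem_span_image hni hmem
  · -- condition → irreducible
    intro H U hUinv
    by_cases hbot : U = ⊥
    · exact Or.inl hbot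
    refine Or.inr ?_
    -- smul cancellation helper
    have smul_cancel : ∀ (aa : ℂ) (v : V), aa ≠ 0 → aa • v ∈ U → v ∈ U := by
      intro aa v ha h
      have := U.smul_mem aa⁻¹ h
      rwa [smul_smul, inv_mul_cancel₀ ha, one_smul] at this
    -- Step 1: some basis vector lies in U
    have hstep1 : ∃ k, w k ∈ U := by
      obtain ⟨u, huU, hune⟩ := (Submodule.ne_bot_iff U).mp hbot
      have hu : u ∈ Submodule.span ℂ (Set.range w) := by rw [hspan]; exact mem_top
      obtain ⟨c, hc⟩ := Finsupp.mem_span_range_iff_exists_finsupp.mp hu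
      have hsum : ∑ k ∈ c.support, c k • w k = u := hc
      have hsupp : c.support.Nonempty := by
        rcases Finset.eq_empty_or_nonempty c.support with h | h
        · exfalso; apply hune; rw [← hsum, h, Finset.sum_empty]
        · exact h
      have hD : ∀ (d : ℂ × ℂ) (k : ℤ × ℤ), T 0 d (w k) =
          (d.1 * (α.1 + 2 * (k.1 : ℂ)) + d.2 * (α.2 + 2 * (k.2 : ℂ))) • w k := by
        intro d k
        rw [hT]
        norm_num
      exact extract w α U (fun d => T 0 d) hD (fun d => hUinv 0 d) c.support.card
        c.support c le_rfl hsupp (fun k hk => Finsupp.mem_support_iff.mp hk) (hsum ▸ huU)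
    -- Step 2: single-step transition
    have hstep : ∀ k m : ℤ × ℤ, w k ∈ U →
        ¬(α.1 + 2 * (k.1 : ℂ) + 2 * b * ((m.1 : ℂ) - k.1) = 0 ∧
          α.2 + 2 * (k.2 : ℂ) + 2 * b * ((m.2 : ℂ) - k.2) = 0) → w m ∈ U := by
      intro k m hk hne
      rw [not_and_or] at hne
      rcases hne with h | h
      · have hmem := hUinv (m - k) (1, 0) (w k) hk
        rw [hT, sub_add_cancel] at hmem
        refine smul_cancel _ _ ?_ hmem
        intro hz
        apply h
        simp only [Prod.fst_sub, Prod.snd_sub] at hz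
        push_cast at hz
        linear_combination hz
      · have hmem := hUinv (m - k) (0, 1) (w k) hk
        rw [hT, sub_add_cancel] at hmem
        refine smul_cancel _ _ ?_ hmem
        intro hz
        apply h
        simp only [Prod.fst_sub, Prod.snd_sub] at hz
        push_cast at hz
        linear_combination hz
    -- Step 3: all basis vectors lie in U
    have hall : ∀ m : ℤ × ℤ, w m ∈ U := by
      obtain ⟨k, hk⟩ := hstep1
      intro m
      obtain ⟨k', h1, h2⟩ := key_path α b H k m
      exact hstep k' m (hstep k k' hk h1) h2
    rw [eq_top_iff, ← hspan, span_le]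
    rintro _ ⟨m, rfl⟩
    exact hall m
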